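/- arXiv:1804.04210 — 2 statements merged into one kernel-verified Lean document; each statement's English description precedes it below -/
import Mathlib

section
/- Let H be a real Hilbert space and x, t ∈ H with x ≠ 0 and x − t ≠ 0. Then ‖s(x−t)⊗s(x−t) − s(x)⊗s(x)‖²_F ≤ 4‖t‖²/‖x−t‖², where s(u) = u/‖u‖. -/
open scoped RealInnerProductSpace

/-- The rank-one operator `u ⊗ v : w ↦ ⟨v, w⟩ u`. -/
noncomputable def rankOne {H : Type*} [NormedAddCommGroup H] [InnerProductSpace ℝ H]
    (u v : H) : H →L[ℝ] H := (innerSL ℝ v).smulRight u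

/-- The spatial sign `s(u) = u / ‖u‖` (with `s(0) = 0`). -/
noncomputable def sgn {H : Type*} [NormedAddCommGroup H] [InnerProductSpace ℝ H]
    (u : H) : H := ‖u‖⁻¹ • u

/-- Squared Hilbert–Schmidt norm relative to a Hilbert basis `b`. -/
noncomputable def hsNormSq {H ι : Type*} [NormedAddCommGroup H] [InnerProductSpace ℝ H]
    (b : HilbertBasis ι ℝ H) (A : H →L[ℝ] H) : ℝ := ∑' i, ‖A (b i)‖ ^ 2

/-- Hilbert–Schmidt norm relative to a Hilbert basis `b`. -/
noncomputable def hsNorm {H ι : Type*} [NormedAddCommGroup H] [InnerProductSpace ℝ H]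
    (b : HilbertBasis ι ℝ H) (A : H →L[ℝ] H) : ℝ := Real.sqrt (hsNormSq b A)

/-- Hilbert–Schmidt inner product relative to a Hilbert basis `b`. -/
noncomputable def hsInner {H ι : Type*} [NormedAddCommGroup H] [InnerProductSpace ℝ H]
    (b : HilbertBasis ι ℝ H) (A B : H →L[ℝ] H) : ℝ := ∑' i, ⟪A (b i), B (b i)⟫

theorem stmt1 {H ι : Type*} [NormedAddCommGroup H] [InnerProductSpace ℝ H]
    (b : HilbertBasis ι ℝ H) (x t : H) (hx : x ≠ 0) (hxt : x - t ≠ 0) :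
    hsNormSq b (rankOne (sgn (x - t)) (sgn (x - t)) - rankOne (sgn x) (sgn x))
      ≤ 4 * ‖t‖ ^ 2 / ‖x - t‖ ^ 2 := by
  set u := sgn (x - t) with hu'
  set v := sgn x with hv'
  have hnu : ‖u‖ = 1 := norm_smul_inv_norm hxt
  have hnv : ‖v‖ = 1 := norm_smul_inv_norm hx
  set c : ℝ := ⟪u, v⟫ with hc
  have h1 := b.hasSum_inner_mul_inner u u
  have h2 := b.hasSum_inner_mul_inner u v
  have h3 := b.hasSum_inner_mul_inner v v
  have key : HasSum (fun i => ‖(rankOne u u - rankOne v v) (b i)‖ ^ 2)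
      (⟪u, u⟫ + ⟪v, v⟫ - 2 * c * ⟪u, v⟫) := by
    have h := (h1.add h3).sub (h2.mul_left (2 * c))
    have heq : (fun i => ‖(rankOne u u - rankOne v v) (b i)‖ ^ 2)
        = fun i => ⟪u, b i⟫ * ⟪b i, u⟫ + ⟪v, b i⟫ * ⟪b i, v⟫
            - 2 * c * (⟪u, b i⟫ * ⟪b i, v⟫) := by
      funext i
      have : (rankOne u u - rankOne v v) (b i) = ⟪u, b i⟫ • u - ⟪v, b i⟫ • v := by
        simp [rankOne]
      rw [this, norm_sub_sq_real, norm_smul, norm_smul, real_inner_smul_left,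
        real_inner_smul_right, hnu, hnv, real_inner_comm (b i) u, real_inner_comm (b i) v]
      simp [abs_mul_abs_self, ← hc]
      ring
    rw [heq]
    exact h
  have hcc : hsNormSq b (rankOne u u - rankOne v v) = 2 - 2 * c ^ 2 := by
    rw [hsNormSq, key.tsum_eq, real_inner_self_eq_norm_sq, real_inner_self_eq_norm_sq,
      hnu, hnv, ← hc]
    ring
  rw [hcc]
  -- now the scalar inequality
  have hna : (0:ℝ) < ‖x - t‖ := norm_pos_iff.mpr hxt
  have hnb : (0:ℝ) < ‖x‖ := norm_pos_iff.mpr hx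
  have hceq : c = ⟪x - t, x⟫ / (‖x - t‖ * ‖x‖) := by
    rw [hc, hu', hv', sgn, sgn, real_inner_smul_left, real_inner_smul_right]
    field_simp
  have hteq : ‖t‖ ^ 2 = ‖x - t‖ ^ 2 - 2 * ⟪x - t, x⟫ + ‖x‖ ^ 2 := by
    have h : ‖t‖ = ‖(x - t) - x‖ := by rw [show (x-t)-x = -t by abel, norm_neg]
    rw [h, norm_sub_sq_real]
  rw [le_div_iff₀ (by positivity)]
  rw [hceq] at *
  set p := ⟪x - t, x⟫
  have h4 := sq_nonneg (‖x‖ ^ 2 - p)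
  have h5 := sq_nonneg (‖x - t‖ * ‖x‖)
  field_simp
  nlinarith [sq_nonneg (‖x‖ ^ 2 - p), sq_nonneg (‖x - t‖ * p), mul_pos hna hnb,
    sq_nonneg p, mul_pos (mul_pos hna hna) (mul_pos hnb hnb), hteq, sq_nonneg ‖t‖]
end

section
/- Let H be a real Hilbert space and x, t ∈ H with x ≠ 0 and ‖x − t‖ ≥ (1/2)‖x‖. Then ‖s(x−t)⊗s(x−t) − s(x)⊗s(x)‖_F ≤ 4‖t‖/‖x‖, where s(u) = u/‖u‖. -/
open scoped RealInnerProductSpace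

lemma norm_sgn {H : Type*} [NormedAddCommGroup H] [InnerProductSpace ℝ H]
    {u : H} (hu : u ≠ 0) : ‖sgn u‖ = 1 := by
  have h : ‖u‖ ≠ 0 := norm_ne_zero_iff.mpr hu
  simp [sgn, norm_smul, abs_of_nonneg (inv_nonneg.mpr (norm_nonneg u)),
    inv_mul_cancel₀ h]

lemma sgn_diff_le {H : Type*} [NormedAddCommGroup H] [InnerProductSpace ℝ H]
    {u v : H} (hu : u ≠ 0) (hv : v ≠ 0) : ‖sgn u - sgn v‖ ≤ 2 * ‖u - v‖ / ‖u‖ := by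
  have hun : (0:ℝ) < ‖u‖ := norm_pos_iff.mpr hu
  have hvn : (0:ℝ) < ‖v‖ := norm_pos_iff.mpr hv
  have hdecomp : sgn u - sgn v = ‖u‖⁻¹ • (u - v) + (‖u‖⁻¹ - ‖v‖⁻¹) • v := by
    simp [sgn, smul_sub, sub_smul]
  have h1 : ‖(‖u‖⁻¹ : ℝ) • (u - v)‖ = ‖u - v‖ / ‖u‖ := by
    rw [norm_smul, norm_inv, norm_norm]; ring
  have h2 : ‖((‖u‖⁻¹ - ‖v‖⁻¹ : ℝ)) • v‖ = |‖v‖ - ‖u‖| / ‖u‖ := by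
    rw [norm_smul, Real.norm_eq_abs,
      (by rw [abs_mul, abs_of_pos hvn] : |(‖u‖⁻¹ - ‖v‖⁻¹) * ‖v‖| = |‖u‖⁻¹ - ‖v‖⁻¹| * ‖v‖).symm,
      (by field_simp : (‖u‖⁻¹ - ‖v‖⁻¹) * ‖v‖ = (‖v‖ - ‖u‖) / ‖u‖),
      abs_div, abs_of_pos hun]
  have hb : |‖v‖ - ‖u‖| ≤ ‖u - v‖ := by
    rw [abs_sub_comm]; exact abs_norm_sub_norm_le u v
  calc ‖sgn u - sgn v‖ ≤ ‖u - v‖ / ‖u‖ + |‖v‖ - ‖u‖| / ‖u‖ := by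
        rw [hdecomp]; exact (norm_add_le _ _).trans (by rw [h1, h2])
    _ ≤ 2 * ‖u - v‖ / ‖u‖ := by
        rw [← add_div]; gcongr; linarith

lemma hsNormSq_eq {H ι : Type*} [NormedAddCommGroup H] [InnerProductSpace ℝ H]
    (b : HilbertBasis ι ℝ H) {a c : H} (ha : ‖a‖ = 1) (hc : ‖c‖ = 1) :
    hsNormSq b (rankOne a a - rankOne c c) = 2 - 2 * ⟪a, c⟫ ^ 2 := by
  have h1 := b.hasSum_inner_mul_inner a a
  have h2 := b.hasSum_inner_mul_inner c c
  have h3 := (b.hasSum_inner_mul_inner a c).mul_left (2 * ⟪a, c⟫)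
  have h := (h1.add h2).sub h3
  have hpt : (fun i => ‖(rankOne a a - rankOne c c) (b i)‖ ^ 2)
      = fun i => ⟪a, b i⟫ * ⟪b i, a⟫ + ⟪c, b i⟫ * ⟪b i, c⟫
        - 2 * ⟪a, c⟫ * (⟪a, b i⟫ * ⟪b i, c⟫) := by
    funext i
    have happ : (rankOne a a - rankOne c c) (b i) = ⟪a, b i⟫ • a - ⟪c, b i⟫ • c := by
      simp [rankOne]
    rw [happ, norm_sub_sq_real, norm_smul, norm_smul, ha, hc,
      real_inner_smul_left, real_inner_smul_right,
      real_inner_comm (b i) a, real_inner_comm (b i) c]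
    simp [Real.norm_eq_abs, mul_pow, sq_abs]
    ring
  have key : HasSum (fun i => ‖(rankOne a a - rankOne c c) (b i)‖ ^ 2)
      (⟪a, a⟫ + ⟪c, c⟫ - 2 * ⟪a, c⟫ * ⟪a, c⟫) := by rw [hpt]; exact h
  rw [hsNormSq, key.tsum_eq, real_inner_self_eq_norm_sq, real_inner_self_eq_norm_sq, ha, hc]
  ring

theorem stmt2 {H ι : Type*} [NormedAddCommGroup H] [InnerProductSpace ℝ H]
    (b : HilbertBasis ι ℝ H) (x t : H) (hx : x ≠ 0) (hxt : ‖x - t‖ ≥ ‖x‖ / 2) :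
    hsNorm b (rankOne (sgn (x - t)) (sgn (x - t)) - rankOne (sgn x) (sgn x))
      ≤ 4 * ‖t‖ / ‖x‖ := by
  have hxn : (0:ℝ) < ‖x‖ := norm_pos_iff.mpr hx
  have hu : x - t ≠ 0 := by
    intro h
    rw [h, norm_zero] at hxt
    linarith
  set a := sgn (x - t) with ha_def
  set c := sgn x with hc_def
  have ha : ‖a‖ = 1 := norm_sgn hu
  have hc : ‖c‖ = 1 := norm_sgn hx
  set s : ℝ := ⟪a, c⟫ with hs_def
  set d : ℝ := ‖a - c‖ with hd_def
  have hd0 : 0 ≤ d := norm_nonneg _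
  have hdsq : d ^ 2 = 2 - 2 * s := by
    rw [hd_def, norm_sub_sq_real, ha, hc]; ring
  -- bound d ≤ 2‖t‖/‖x‖
  have hd : d ≤ 2 * ‖t‖ / ‖x‖ := by
    rcases le_total ‖x‖ ‖x - t‖ with hle | hle
    · have h := sgn_diff_le hu hx
      have hxtn : (0:ℝ) < ‖x - t‖ := lt_of_lt_of_le hxn hle
      have : ‖x - t - x‖ = ‖t‖ := by
        rw [show x - t - x = -t by abel, norm_neg]
      rw [this] at h
      calc d ≤ 2 * ‖t‖ / ‖x - t‖ := h
        _ ≤ 2 * ‖t‖ / ‖x‖ := by gcongr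
    · have h := sgn_diff_le hx hu
      have : ‖x - (x - t)‖ = ‖t‖ := by rw [show x - (x - t) = t by abel]
      rw [this] at h
      rw [hd_def, norm_sub_rev]
      exact h
  -- compute hsNormSq
  have hsq := hsNormSq_eq b ha hc
  have hle2 : 2 - 2 * s ^ 2 ≤ 2 * d ^ 2 := by
    rw [hdsq]; nlinarith [sq_nonneg (1 - s)]
  have hsqrt2 : Real.sqrt 2 ≤ 2 := by
    nlinarith [Real.sq_sqrt (show (0:ℝ) ≤ 2 by norm_num), Real.sqrt_nonneg 2]
  calc hsNorm b (rankOne a a - rankOne c c)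
      = Real.sqrt (2 - 2 * s ^ 2) := by rw [hsNorm, hsq]
    _ ≤ Real.sqrt (2 * d ^ 2) := Real.sqrt_le_sqrt hle2
    _ = Real.sqrt 2 * d := by
        rw [Real.sqrt_mul (by norm_num : (0:ℝ) ≤ 2), Real.sqrt_sq hd0]
    _ ≤ 2 * d := by nlinarith [Real.sqrt_nonneg 2]
    _ ≤ 2 * (2 * ‖t‖ / ‖x‖) := by linarith
    _ = 4 * ‖t‖ / ‖x‖ := by ring
end
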